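/- Let G be a graph on an even number n of vertices v_0,…,v_{n−1}, and construct G' by adding n new vertices c_0,…,c_{n−1} together with the edges (v_i,c_i), (v_i,c_{i+1}), and (c_i,c_{i+1}) for all i, indices taken mod n. Then v_0 c_1 v_1 c_2 v_2 … c_{n−1} v_{n−1} c_0 is a Hamiltonian path of G' starting at v_0; consequently, the minimal length of a walk in G' starting at v_0 that visits every vertex of G' is exactly 2n − 1. -/

import Mathlib

namespace Stmt7

variable {n : ℕ} [NeZero n]

/-- Vertices of `G'`: the original vertices `v_0,…,v_{n-1}` (left) and the new vertices
`c_0,…,c_{n-1}` (right). -/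
abbrev V' (n : ℕ) := Fin n ⊕ Fin n

/-- The base edge relation of `G'`: the edges of `G`, plus `(v_i,c_i)`, `(v_i,c_{i+1})`
and `(c_i,c_{i+1})` for all `i` (indices mod `n`). -/
def rel (G : SimpleGraph (Fin n)) : V' n → V' n → Prop
  | .inl i, .inl j => G.Adj i j
  | .inl i, .inr j => j = i ∨ j = i + 1
  | .inr i, .inr j => j = i + 1
  | _, _ => False

/-- The graph `G'` built from `G`. -/
def G' (G : SimpleGraph (Fin n)) : SimpleGraph (V' n) := SimpleGraph.fromRel (rel G)

open Fin.NatCast in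
/-- The vertex sequence `v_0, c_1, v_1, c_2, v_2, …, c_{n-1}, v_{n-1}, c_0`. -/
def hamList (n : ℕ) [NeZero n] : List (V' n) :=
  Sum.inl 0 ::
    (((List.range (n - 1)).flatMap fun i =>
      [Sum.inr ((i + 1 : ℕ) : Fin n), Sum.inl ((i + 1 : ℕ) : Fin n)])
    ++ [Sum.inr 0])

end Stmt7

namespace Stmt7Aux
open Stmt7
open Fin.NatCast

variable {n : ℕ} [NeZero n] {G : SimpleGraph (Fin n)}

attribute [local instance 2000] instBEqOfDecidableEq

lemma npos : 0 < n := Nat.pos_of_ne_zero (NeZero.ne n)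

lemma adj1 (i : Fin n) : (G' G).Adj (Sum.inl i) (Sum.inr (i + 1)) :=
  (SimpleGraph.fromRel_adj _ _ _).mpr ⟨by simp, Or.inl (Or.inr rfl)⟩

lemma adj1' (k : ℕ) :
    (G' G).Adj (Sum.inl ((k : ℕ) : Fin n)) (Sum.inr ((k + 1 : ℕ) : Fin n)) := by
  have h : ((k + 1 : ℕ) : Fin n) = ((k : ℕ) : Fin n) + 1 := by push_cast; ring
  rw [h]; exact adj1 _

lemma adj2 (i : Fin n) : (G' G).Adj (Sum.inr i) (Sum.inl i) :=
  (SimpleGraph.fromRel_adj _ _ _).mpr ⟨by simp, Or.inr (Or.inl rfl)⟩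

lemma adj_last (k : ℕ) (h : k + 1 = n) :
    (G' G).Adj (Sum.inl ((k : ℕ) : Fin n)) (Sum.inr 0) := by
  have := adj1' (G := G) k
  rwa [h, Fin.natCast_self] at this

/-- The walk `v_k, c_{k+1}, v_{k+1}, …, c_{n-1}, v_{n-1}, c_0`. -/
def seg (G : SimpleGraph (Fin n)) :
    ∀ k : ℕ, k < n → (G' G).Walk (Sum.inl ((k : ℕ) : Fin n)) (Sum.inr 0)
  | k, _hk =>
    if h : k + 1 < n then
      .cons (adj1' k) (.cons (adj2 _) (seg G (k + 1) h))
    else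
      .cons (adj_last k (by omega)) .nil
  termination_by k _ => n - k

lemma seg_support : ∀ (k : ℕ) (hk : k < n),
    (seg G k hk).support =
      Sum.inl ((k : ℕ) : Fin n) ::
        (((List.range' (k + 1) (n - 1 - k)).flatMap fun i =>
            [Sum.inr ((i : ℕ) : Fin n), Sum.inl ((i : ℕ) : Fin n)])
          ++ [Sum.inr 0])
  | k, hk => by
    rw [seg]
    split_ifs with h
    · rw [SimpleGraph.Walk.support_cons, SimpleGraph.Walk.support_cons,
        seg_support (k + 1) h]
      have h1 : n - 1 - k = (n - 1 - (k + 1)) + 1 := by omega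
      rw [h1, List.range'_succ]
      simp
    · have h0 : n - 1 - k = 0 := by omega
      simp [h0]
  termination_by k _ => n - k

lemma seg_zero_support :
    (seg G 0 npos).support = hamList n := by
  rw [seg_support]
  simp only [hamList, Nat.cast_zero, Nat.zero_add, Nat.sub_zero]
  congr 2
  rw [List.range'_eq_map_range, List.flatMap_map]
  refine List.flatMap_congr ?_
  intro i _
  simp [Nat.add_comm]

lemma mem_hamList (v : V' n) : v ∈ hamList n := by
  rcases v with j | j
  · rcases eq_or_ne j 0 with rfl | hj
    · exact List.mem_cons_self
    · have hj1 : 1 ≤ j.val := by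
        rcases Nat.eq_zero_or_pos j.val with h | h
        · exact absurd (Fin.ext h) hj
        · exact h
      refine List.mem_cons_of_mem _ (List.mem_append_left _ ?_)
      refine List.mem_flatMap.mpr ⟨j.val - 1, List.mem_range.mpr (by omega), ?_⟩
      have hcast : ((j.val - 1 + 1 : ℕ) : Fin n) = j := by
        rw [Nat.sub_add_cancel hj1]; exact Fin.cast_val_eq_self j
      simp [hcast]
  · rcases eq_or_ne j 0 with rfl | hj
    · exact List.mem_cons_of_mem _ (List.mem_append_right _ (by simp))
    · have hj1 : 1 ≤ j.val := by
        rcases Nat.eq_zero_or_pos j.val with h | h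
        · exact absurd (Fin.ext h) hj
        · exact h
      refine List.mem_cons_of_mem _ (List.mem_append_left _ ?_)
      refine List.mem_flatMap.mpr ⟨j.val - 1, List.mem_range.mpr (by omega), ?_⟩
      have hcast : ((j.val - 1 + 1 : ℕ) : Fin n) = j := by
        rw [Nat.sub_add_cancel hj1]; exact Fin.cast_val_eq_self j
      simp [hcast]

lemma flatMap_pair_length {α β : Type*} (f g : α → β) (l : List α) :
    (l.flatMap fun i => [f i, g i]).length = 2 * l.length := by
  induction l with
  | nil => simp
  | cons a l ih => simp [List.flatMap_cons, ih]; ring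

lemma hamList_length : (hamList n).length = 2 * n := by
  have h1 : 0 < n := npos
  have h2 := flatMap_pair_length (fun i : ℕ => (Sum.inr ((i + 1 : ℕ) : Fin n) : V' n))
      (fun i : ℕ => (Sum.inl ((i + 1 : ℕ) : Fin n) : V' n)) (List.range (n - 1))
  rw [hamList, List.length_cons, List.length_append, h2, List.length_range]
  simp
  omega

lemma sum_count {α : Type*} [Fintype α] [DecidableEq α] (l : List α) :
    ∑ v : α, l.count v = l.length := by
  induction l with
  | nil => simp
  | cons a l ih =>
    simp [List.count_cons, Finset.sum_add_distrib, ih, add_comm]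

lemma hamList_count (v : V' n) : (hamList n).count v = 1 := by
  classical
  have hmem : ∀ u : V' n, 1 ≤ (hamList n).count u := fun u =>
    List.count_pos_iff.mpr (mem_hamList u)
  have hcard : Fintype.card (V' n) = 2 * n := by
    simp [Fintype.card_sum, Fintype.card_fin]; ring
  have hsum : ∑ u : V' n, (hamList n).count u = 2 * n := by
    rw [sum_count, hamList_length]
  by_contra hne
  have h2 : 2 ≤ (hamList n).count v := by
    have := hmem v; omega
  have hlt : (Finset.univ : Finset (V' n)).card < ∑ u : V' n, (hamList n).count u := by
    calc (Finset.univ : Finset (V' n)).card = ∑ _u : V' n, 1 := by simp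
    _ < ∑ u : V' n, (hamList n).count u :=
      Finset.sum_lt_sum (fun u _ => hmem u) ⟨v, Finset.mem_univ v, by omega⟩
  rw [hsum, Finset.card_univ, hcard] at hlt
  omega

end Stmt7Aux

open Stmt7 in
/-- For any `G` on an even number `n` of vertices,
`v_0 c_1 v_1 c_2 … c_{n-1} v_{n-1} c_0` is a Hamiltonian path of `G'` starting at `v_0`;
consequently the minimal length of a covering walk of `G'` from `v_0` is exactly
`2n - 1`. -/
theorem static_coverage_of_Gprime (n : ℕ) [NeZero n] (hn : Even n)
    (G : SimpleGraph (Fin n)) :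
    (∃ P : (G' G).Walk (Sum.inl 0) (Sum.inr 0), P.IsHamiltonian ∧ P.support = hamList n) ∧
    IsLeast {L : ℕ | ∃ (w : V' n) (W : (G' G).Walk (Sum.inl 0) w),
        (∀ v : V' n, v ∈ W.support) ∧ W.length = L} (2 * n - 1) := by
  classical
  open Stmt7Aux in
  open Fin.NatCast in
  have hzero : (Sum.inl ((0 : ℕ) : Fin n) : V' n) = Sum.inl 0 := by norm_num
  set P : (G' G).Walk (Sum.inl 0) (Sum.inr 0) :=
    (Stmt7Aux.seg G 0 Stmt7Aux.npos).copy hzero rfl with hP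
  have hsupp : P.support = hamList n := by
    rw [hP, SimpleGraph.Walk.support_copy, Stmt7Aux.seg_zero_support]
  have hlenP : P.length = 2 * n - 1 := by
    have h1 : P.support.length = P.length + 1 := SimpleGraph.Walk.length_support P
    rw [hsupp, Stmt7Aux.hamList_length] at h1
    have : 0 < n := Stmt7Aux.npos
    omega
  refine ⟨⟨P, ?_, hsupp⟩, ⟨Sum.inr 0, P, ?_, hlenP⟩, ?_⟩
  · intro v
    rw [hsupp]
    exact Stmt7Aux.hamList_count v
  · intro v
    rw [hsupp]
    exact Stmt7Aux.mem_hamList v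
  · rintro L ⟨w, W, hcov, rfl⟩
    have h1 : W.support.toFinset = Finset.univ :=
      Finset.eq_univ_iff_forall.mpr (by simpa using hcov)
    have h2 := List.toFinset_card_le W.support
    rw [h1, Finset.card_univ] at h2
    have hcard : Fintype.card (V' n) = 2 * n := by
      simp [Fintype.card_sum, Fintype.card_fin]; ring
    have h3 : W.support.length = W.length + 1 := SimpleGraph.Walk.length_support W
    omega
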